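/- Let P be a real symmetric m×m matrix, R a nonsingular real m×m matrix with P = Rᵀ diag(I_{π(P)}, −I_{ν(P)}, 0) R, and let R₁ be the matrix formed from the first π(P)+ν(P) rows of R. Then for any real m×n matrix S, SᵀPS = (R₁S)ᵀ diag(I_{π(P)}, −I_{ν(P)}) (R₁S), and nullity((R₁S)ᵀ) ≤ nullity(Sᵀ). -/

import Mathlib

open Matrix

noncomputable def posEigen {m : ℕ} (M : Matrix (Fin m) (Fin m) ℝ) : ℕ :=
  if h : M.IsHermitian then (Finset.univ.filter fun i => 0 < h.eigenvalues i).card else 0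

noncomputable def negEigen {m : ℕ} (M : Matrix (Fin m) (Fin m) ℝ) : ℕ :=
  if h : M.IsHermitian then (Finset.univ.filter fun i => h.eigenvalues i < 0).card else 0

/-- Dimension of the kernel of (the linear map induced by) a real matrix. -/
noncomputable def nullity {m n : ℕ} (M : Matrix (Fin m) (Fin n) ℝ) : ℕ :=
  Module.finrank ℝ (LinearMap.ker M.mulVecLin)

/-- Sum over `Fin m` of a function vanishing from index `N` on equals the sum over `Fin N`. -/
lemma sum_trunc {m N : ℕ} (hN : N ≤ m) (f : Fin m → ℝ)
    (hf : ∀ i : Fin m, N ≤ (i : ℕ) → f i = 0) :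
    ∑ i : Fin m, f i = ∑ i : Fin N, f (Fin.castLE hN i) := by
  classical
  set g : ℕ → ℝ := fun a => if h : a < m then f ⟨a, h⟩ else 0 with hg
  have h1 : ∑ i : Fin m, f i = ∑ a ∈ Finset.range m, g a := by
    rw [← Fin.sum_univ_eq_sum_range]
    exact Finset.sum_congr rfl fun i _ => by simp [hg]
  have h2 : ∑ i : Fin N, f (Fin.castLE hN i) = ∑ a ∈ Finset.range N, g a := by
    rw [← Fin.sum_univ_eq_sum_range]
    refine Finset.sum_congr rfl fun i _ => ?_
    simp only [hg]
    rw [dif_pos (lt_of_lt_of_le i.isLt hN)]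
    exact congrArg f (Fin.ext rfl)
  rw [h1, h2]
  refine (Finset.sum_subset (Finset.range_subset_range.2 hN) ?_).symm
  intro a ha hna
  simp only [Finset.mem_range] at ha hna
  simp only [hg, dif_pos ha]
  exact hf ⟨a, ha⟩ (le_of_not_gt hna)

theorem stmt4 {m n : ℕ} (P : Matrix (Fin m) (Fin m) ℝ) (hP : P.IsHermitian)
    (R : Matrix (Fin m) (Fin m) ℝ) (hR : IsUnit R.det)
    (hpq : posEigen P + negEigen P ≤ m)
    -- P = Rᵀ · diag(I_{π(P)}, −I_{ν(P)}, 0) · R :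
    (hPRR : P = Rᵀ *
      (Matrix.of fun i j : Fin m => if i = j then
          (if (i : ℕ) < posEigen P then (1 : ℝ)
           else if (i : ℕ) < posEigen P + negEigen P then -1 else 0) else 0) * R)
    (S : Matrix (Fin m) (Fin n) ℝ)
    -- R₁ is formed from the first π(P)+ν(P) rows of R :
    (R₁ : Matrix (Fin (posEigen P + negEigen P)) (Fin m) ℝ)
    (hR₁ : R₁ = Matrix.of fun i j => R (Fin.castLE hpq i) j) :
    Sᵀ * P * S = (R₁ * S)ᵀ *
      (Matrix.of fun i j : Fin (posEigen P + negEigen P) => if i = j then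
          (if (i : ℕ) < posEigen P then (1 : ℝ) else -1) else 0) * (R₁ * S) ∧
    nullity (R₁ * S)ᵀ ≤ nullity Sᵀ := by
  classical
  constructor
  · -- algebraic identity
    have key : Rᵀ *
        (Matrix.of fun i j : Fin m => if i = j then
          (if (i : ℕ) < posEigen P then (1 : ℝ)
           else if (i : ℕ) < posEigen P + negEigen P then -1 else 0) else 0) * R
        = R₁ᵀ *
        (Matrix.of fun i j : Fin (posEigen P + negEigen P) => if i = j then
          (if (i : ℕ) < posEigen P then (1 : ℝ) else -1) else 0) * R₁ := by
      ext j k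
      have e1 : (Rᵀ *
          (Matrix.of fun i j : Fin m => if i = j then
            (if (i : ℕ) < posEigen P then (1 : ℝ)
             else if (i : ℕ) < posEigen P + negEigen P then -1 else 0) else 0) * R) j k
          = ∑ i : Fin m, R i j * (if (i : ℕ) < posEigen P then (1 : ℝ)
              else if (i : ℕ) < posEigen P + negEigen P then -1 else 0) * R i k := by
        simp [mul_apply, ite_mul, Finset.mul_sum, mul_comm]
      have e2 : (R₁ᵀ *
          (Matrix.of fun i j : Fin (posEigen P + negEigen P) => if i = j then
            (if (i : ℕ) < posEigen P then (1 : ℝ) else -1) else 0) * R₁) j k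
          = ∑ i : Fin (posEigen P + negEigen P), R (Fin.castLE hpq i) j *
              (if (i : ℕ) < posEigen P then (1 : ℝ) else -1) * R (Fin.castLE hpq i) k := by
        simp [mul_apply, hR₁, ite_mul, Finset.mul_sum, mul_comm]
      rw [e1, e2,
        sum_trunc hpq (fun i : Fin m => R i j * (if (i : ℕ) < posEigen P then (1 : ℝ)
              else if (i : ℕ) < posEigen P + negEigen P then -1 else 0) * R i k) ?_]
      · refine Finset.sum_congr rfl fun i _ => ?_
        have hi : ((Fin.castLE hpq i : Fin m) : ℕ) = (i : ℕ) := rfl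
        rw [hi]
        by_cases h : (i : ℕ) < posEigen P
        · simp [h]
        · simp [h, i.isLt]
      · intro i hi
        have h1 : ¬ (i : ℕ) < posEigen P :=
          fun h => absurd (lt_of_lt_of_le h (Nat.le_add_right _ _)) (not_lt.2 hi)
        simp [h1, not_lt.2 hi]
    conv_lhs => rw [hPRR]
    rw [key]
    simp only [transpose_mul, Matrix.mul_assoc]
  · -- nullity inequality
    have hRT : Function.Injective (Rᵀ.mulVecLin) := by
      have hu : IsUnit Rᵀ := (Matrix.isUnit_iff_isUnit_det _).mpr (by rwa [det_transpose])
      exact Matrix.mulVec_injective_iff_isUnit.2 hu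
    have hR1T : Function.Injective (R₁ᵀ.mulVecLin) := by
      rw [← LinearMap.ker_eq_bot, LinearMap.ker_eq_bot']
      intro x hx
      set y : Fin m → ℝ :=
        fun k => if h : (k : ℕ) < posEigen P + negEigen P then x ⟨(k : ℕ), h⟩ else 0 with hy
      have hRy : Rᵀ.mulVecLin y = 0 := by
        funext j
        have e3 : (Rᵀ.mulVecLin y) j = ∑ k : Fin m, R k j * y k := by
          simp [Matrix.mulVecLin, mulVec, vecMul, dotProduct, transpose_apply, mul_comm]
        rw [e3, sum_trunc hpq (fun k : Fin m => R k j * y k) ?_]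
        · have e4 : ∀ i : Fin (posEigen P + negEigen P), y (Fin.castLE hpq i) = x i := by
            intro i
            simp only [hy]
            rw [dif_pos (show ((Fin.castLE hpq i : Fin m) : ℕ) < posEigen P + negEigen P
              from i.isLt)]
            exact congrArg x (Fin.ext rfl)
          have e5 : (R₁ᵀ.mulVecLin x) j
              = ∑ i : Fin (posEigen P + negEigen P), R (Fin.castLE hpq i) j * x i := by
            simp [Matrix.mulVecLin, mulVec, vecMul, dotProduct, transpose_apply, hR₁, mul_comm]
          calc ∑ i : Fin (posEigen P + negEigen P),
                R (Fin.castLE hpq i) j * y (Fin.castLE hpq i)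
              = ∑ i : Fin (posEigen P + negEigen P), R (Fin.castLE hpq i) j * x i :=
                Finset.sum_congr rfl fun i _ => by rw [e4]
          _ = (R₁ᵀ.mulVecLin x) j := e5.symm
          _ = 0 := by rw [hx]; rfl
        · intro i hi
          simp [hy, dif_neg (not_lt.2 hi)]
      have hy0 : y = 0 := hRT (by simpa using hRy)
      funext i
      have h6 := congrFun hy0 (Fin.castLE hpq i)
      simpa [hy, i.isLt] using h6
    have htr : (R₁ * S)ᵀ = Sᵀ * R₁ᵀ := transpose_mul _ _
    rw [htr]
    unfold nullity
    have hker : (Sᵀ * R₁ᵀ).mulVecLin = Sᵀ.mulVecLin ∘ₗ R₁ᵀ.mulVecLin := by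
      rw [Matrix.mulVecLin_mul]
    rw [hker, LinearMap.ker_comp]
    set f := R₁ᵀ.mulVecLin
    set K := LinearMap.ker Sᵀ.mulVecLin
    have hmap : ∀ v ∈ K.comap f, f v ∈ K := fun v hv => hv
    have hinj : Function.Injective (f.restrict hmap) := by
      intro a b hab
      have hfab : f a = f b := congrArg Subtype.val hab
      exact Subtype.ext (hR1T hfab)
    exact LinearMap.finrank_le_finrank_of_injective hinj
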